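/- (Supersonic Cauchy problem.) Let θ₀ ∈ (0, π/2) and u₀ ∈ (c_*, u_max). Then there exists a unique C¹ function u : [θ₀, π/2] → ℝ with u(θ₀) = u₀, c_* < u(θ) < u_max for all θ, satisfying u′(θ) = cot θ·c(u(θ))²·u(θ)/(u(θ)² − c(u(θ))²) on [θ₀, π/2]; moreover u is strictly increasing on [θ₀, π/2]. -/

import Mathlib

open Real Set Filter Topology

/-- Maximal speed `u_max = √(2c₀²/(γ−1))`. -/
noncomputable def uMax (γ c₀ : ℝ) : ℝ := Real.sqrt (2 * c₀ ^ 2 / (γ - 1))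

/-- Critical (sonic) speed `c_* = √(2c₀²/(γ+1))`. -/
noncomputable def cStar (γ c₀ : ℝ) : ℝ := Real.sqrt (2 * c₀ ^ 2 / (γ + 1))

/-- Local sonic speed `c(u) = √(c₀² − ((γ−1)/2)u²)`. -/
noncomputable def sonic (γ c₀ u : ℝ) : ℝ := Real.sqrt (c₀ ^ 2 - (γ - 1) / 2 * u ^ 2)

/-- Density `ρ(u) = ((c₀² − ((γ−1)/2)u²)/γ)^{1/(γ−1)}`. -/
noncomputable def dens (γ c₀ u : ℝ) : ℝ :=
  ((c₀ ^ 2 - (γ - 1) / 2 * u ^ 2) / γ) ^ ((1 : ℝ) / (γ - 1))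

/-- Mass flux `F(u) = ρ(u)·u`. -/
noncomputable def flux (γ c₀ u : ℝ) : ℝ := dens γ c₀ u * u

/-- Pressure `p(u) = ρ(u)^γ`. -/
noncomputable def pres (γ c₀ u : ℝ) : ℝ := dens γ c₀ u ^ γ

set_option linter.unusedSectionVars false

/-- `q(u) = c(u)^2`. -/
noncomputable def qq (γ c₀ u : ℝ) : ℝ := c₀ ^ 2 - (γ - 1) / 2 * u ^ 2

/-- `H(u) = u * q(u)^(1/(γ-1))`, proportional to the mass flux. -/
noncomputable def HH (γ c₀ u : ℝ) : ℝ := u * (qq γ c₀ u) ^ ((1:ℝ)/(γ-1))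

section aux
variable {γ c₀ : ℝ} (hγ : 1 < γ) (hc₀ : 0 < c₀)
include hγ hc₀

lemma cStar_pos : 0 < cStar γ c₀ :=
  Real.sqrt_pos.2 (by positivity)

lemma sq_cStar : cStar γ c₀ ^ 2 = 2 * c₀ ^ 2 / (γ + 1) :=
  Real.sq_sqrt (by positivity)

lemma sq_uMax : uMax γ c₀ ^ 2 = 2 * c₀ ^ 2 / (γ - 1) := by
  have h1 : (0:ℝ) < γ - 1 := by linarith
  exact Real.sq_sqrt (by positivity)

lemma uMax_pos : 0 < uMax γ c₀ := by
  have h1 : (0:ℝ) < γ - 1 := by linarith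
  exact Real.sqrt_pos.2 (by positivity)

lemma cStar_lt_uMax : cStar γ c₀ < uMax γ c₀ := by
  have h1 : (0:ℝ) < γ - 1 := by linarith
  have h2 : (0:ℝ) < γ + 1 := by linarith
  apply Real.sqrt_lt_sqrt (by positivity)
  rw [div_lt_div_iff₀ h2 h1]
  nlinarith [sq_nonneg c₀]

lemma qq_cStar : qq γ c₀ (cStar γ c₀) = cStar γ c₀ ^ 2 := by
  have h2 : (0:ℝ) < γ + 1 := by linarith
  rw [qq, sq_cStar hγ hc₀]
  field_simp
  ring

lemma qq_uMax : qq γ c₀ (uMax γ c₀) = 0 := by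
  have h1 : (0:ℝ) < γ - 1 := by linarith
  rw [qq, sq_uMax hγ hc₀]
  field_simp
  ring

lemma qq_pos {x : ℝ} (hx0 : 0 ≤ x) (hx : x < uMax γ c₀) : 0 < qq γ c₀ x := by
  have h1 : (0:ℝ) < γ - 1 := by linarith
  have h := sq_uMax hγ hc₀
  have hx2 : x ^ 2 < uMax γ c₀ ^ 2 := by nlinarith
  rw [h] at hx2
  have := (lt_div_iff₀ h1).1 hx2
  rw [qq]; nlinarith

lemma qq_lt_sq {x : ℝ} (hx : cStar γ c₀ < x) : qq γ c₀ x < x ^ 2 := by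
  have h2 : (0:ℝ) < γ + 1 := by linarith
  have hcp := cStar_pos hγ hc₀
  have h := sq_cStar hγ hc₀
  have hx2 : cStar γ c₀ ^ 2 < x ^ 2 := by nlinarith
  rw [h] at hx2
  have := (div_lt_iff₀ h2).1 hx2
  rw [qq]; nlinarith

lemma HH_pos {x : ℝ} (hx0 : 0 < x) (hq : 0 < qq γ c₀ x) : 0 < HH γ c₀ x :=
  mul_pos hx0 (Real.rpow_pos_of_pos hq _)

lemma HH_cont : Continuous (HH γ c₀) := by
  have h1 : (0:ℝ) < γ - 1 := by linarith
  have he : (0:ℝ) < 1/(γ-1) := by positivity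
  apply continuous_id.mul
  exact (continuous_const.sub (continuous_const.mul (continuous_pow 2))).rpow_const
    (fun x => Or.inr he.le)

lemma HH_hasStrictDerivAt {x : ℝ} (hq : 0 < qq γ c₀ x) :
    HasStrictDerivAt (HH γ c₀)
      ((qq γ c₀ x) ^ ((1:ℝ)/(γ-1)) * (qq γ c₀ x - x ^ 2) / qq γ c₀ x) x := by
  have h1 : (0:ℝ) < γ - 1 := by linarith
  have hqd : HasStrictDerivAt (fun u => qq γ c₀ u) (-((γ-1) * x)) x := by
    have : HasStrictDerivAt (fun u : ℝ => c₀ ^ 2 - (γ - 1) / 2 * u ^ 2)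
        (0 - (γ-1)/2 * (2 * x)) x := by
      exact (hasStrictDerivAt_const x _).sub
        (((hasStrictDerivAt_pow 2 x).const_mul ((γ-1)/2)).congr_deriv (by ring))
    simpa [qq] using this.congr_deriv (by ring)
  have hr : HasStrictDerivAt (fun u => (qq γ c₀ u) ^ ((1:ℝ)/(γ-1)))
      ((1/(γ-1)) * (qq γ c₀ x) ^ ((1:ℝ)/(γ-1) - 1) * (-((γ-1) * x))) x := by
    exact (Real.hasStrictDerivAt_rpow_const_of_ne hq.ne' _).comp x hqd |>.congr_deriv (by ring)
  have := (hasStrictDerivAt_id x).mul hr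
  apply this.congr_deriv
  rw [Real.rpow_sub_one hq.ne']
  field_simp
  simp only [id_eq]
  ring

end aux

section aux2
variable {γ c₀ : ℝ} (hγ : 1 < γ) (hc₀ : 0 < c₀)
include hγ hc₀

lemma HH_strictAntiOn : StrictAntiOn (HH γ c₀) (Icc (cStar γ c₀) (uMax γ c₀)) := by
  have hcp := cStar_pos hγ hc₀
  apply strictAntiOn_of_deriv_neg (convex_Icc _ _) (HH_cont hγ hc₀).continuousOn
  intro x hx
  rw [interior_Icc] at hx
  have hx0 : 0 < x := lt_trans hcp hx.1
  have hq : 0 < qq γ c₀ x := qq_pos hγ hc₀ hx0.le hx.2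
  rw [(HH_hasStrictDerivAt hγ hc₀ hq).hasDerivAt.deriv]
  have h1 : 0 < (qq γ c₀ x) ^ ((1:ℝ)/(γ-1)) := Real.rpow_pos_of_pos hq _
  have h2 : qq γ c₀ x - x ^ 2 < 0 := sub_neg.2 (qq_lt_sq hγ hc₀ hx.1)
  exact div_neg_of_neg_of_pos (mul_neg_of_pos_of_neg h1 h2) hq

lemma HH_uMax : HH γ c₀ (uMax γ c₀) = 0 := by
  have h1 : (0:ℝ) < γ - 1 := by linarith
  rw [HH, qq_uMax hγ hc₀, Real.zero_rpow (by positivity), mul_zero]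

lemma HH_root {y : ℝ} (hy0 : 0 < y) (hy1 : y < HH γ c₀ (cStar γ c₀)) :
    ∃ x, x ∈ Ioo (cStar γ c₀) (uMax γ c₀) ∧ HH γ c₀ x = y := by
  have hle := (cStar_lt_uMax hγ hc₀).le
  have h := intermediate_value_Icc' hle (HH_cont hγ hc₀).continuousOn
  have hy : y ∈ Icc (HH γ c₀ (uMax γ c₀)) (HH γ c₀ (cStar γ c₀)) := by
    rw [HH_uMax hγ hc₀]; exact ⟨hy0.le, hy1.le⟩
  obtain ⟨x, hx, hxy⟩ := h hy
  refine ⟨x, ⟨?_, ?_⟩, hxy⟩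
  · rcases eq_or_lt_of_le hx.1 with h | h
    · exfalso; rw [← h] at hxy; linarith
    · exact h
  · rcases eq_or_lt_of_le hx.2 with h | h
    · rw [h, HH_uMax hγ hc₀] at hxy; linarith
    · exact h

end aux2

lemma key_alg {γ c₀ x θ : ℝ} (hq : 0 < qq γ c₀ x) (hsup : qq γ c₀ x < x ^ 2)
    (hs : Real.sin θ ≠ 0) :
    ((qq γ c₀ x) ^ ((1:ℝ)/(γ-1)) * (qq γ c₀ x - x ^ 2) / qq γ c₀ x) *
      (Real.cot θ * qq γ c₀ x * x / (x ^ 2 - qq γ c₀ x))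
    = -(HH γ c₀ x) * (Real.cos θ / Real.sin θ) := by
  rw [Real.cot_eq_cos_div_sin, HH]
  have h1 : qq γ c₀ x ≠ 0 := hq.ne'
  have h2 : x ^ 2 - qq γ c₀ x ≠ 0 := sub_ne_zero.2 (ne_of_gt hsup)
  set t := (qq γ c₀ x) ^ ((1:ℝ)/(γ-1))
  field_simp
  ring

lemma sonic_sq {γ c₀ x : ℝ} (h : 0 ≤ qq γ c₀ x) : sonic γ c₀ x ^ 2 = qq γ c₀ x :=
  Real.sq_sqrt h

/-- the supersonic Cauchy problem: for `θ₀ ∈ (0, π/2)` and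
`u₀ ∈ (c_*, u_max)` there is a unique C¹ solution on `[θ₀, π/2]` of
`u′ = cot θ · c(u)²u/(u² − c(u)²)` with `u(θ₀) = u₀`, staying supersonic, and it is
strictly increasing. -/
theorem supersonic_cauchy_problem (γ c₀ θ₀ u₀ : ℝ) (hγ : 1 < γ) (hc₀ : 0 < c₀)
    (hθ₀ : θ₀ ∈ Set.Ioo 0 (π / 2)) (hu₀ : u₀ ∈ Set.Ioo (cStar γ c₀) (uMax γ c₀)) :
    ∃ u : ℝ → ℝ,
      (ContDiffOn ℝ 1 u (Set.Icc θ₀ (π / 2)) ∧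
        u θ₀ = u₀ ∧
        (∀ θ ∈ Set.Icc θ₀ (π / 2), u θ ∈ Set.Ioo (cStar γ c₀) (uMax γ c₀)) ∧
        (∀ θ ∈ Set.Icc θ₀ (π / 2),
          HasDerivWithinAt u
            (Real.cot θ * sonic γ c₀ (u θ) ^ 2 * u θ / (u θ ^ 2 - sonic γ c₀ (u θ) ^ 2))
            (Set.Icc θ₀ (π / 2)) θ)) ∧
      StrictMonoOn u (Set.Icc θ₀ (π / 2)) ∧
      ∀ v : ℝ → ℝ,
        (ContDiffOn ℝ 1 v (Set.Icc θ₀ (π / 2)) ∧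
          v θ₀ = u₀ ∧
          (∀ θ ∈ Set.Icc θ₀ (π / 2), v θ ∈ Set.Ioo (cStar γ c₀) (uMax γ c₀)) ∧
          (∀ θ ∈ Set.Icc θ₀ (π / 2),
            HasDerivWithinAt v
              (Real.cot θ * sonic γ c₀ (v θ) ^ 2 * v θ / (v θ ^ 2 - sonic γ c₀ (v θ) ^ 2))
              (Set.Icc θ₀ (π / 2)) θ)) →
        Set.EqOn u v (Set.Icc θ₀ (π / 2)) := by
  classical
  obtain ⟨hθ₀1, hθ₀2⟩ := hθ₀
  obtain ⟨hu₀1, hu₀2⟩ := hu₀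
  have hπ : (0:ℝ) < π := pi_pos
  have hθ₀π : θ₀ < π := by linarith
  have hsθ₀ : 0 < Real.sin θ₀ := Real.sin_pos_of_pos_of_lt_pi hθ₀1 hθ₀π
  have hcSpos := cStar_pos hγ hc₀
  have hu₀pos : 0 < u₀ := hcSpos.trans hu₀1
  have hqu₀ : 0 < qq γ c₀ u₀ := qq_pos hγ hc₀ hu₀pos.le hu₀2
  have hHu₀pos : 0 < HH γ c₀ u₀ := HH_pos hγ hc₀ hu₀pos hqu₀
  have hcSmem : cStar γ c₀ ∈ Icc (cStar γ c₀) (uMax γ c₀) :=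
    ⟨le_refl _, (cStar_lt_uMax hγ hc₀).le⟩
  have hu₀mem : u₀ ∈ Icc (cStar γ c₀) (uMax γ c₀) := ⟨hu₀1.le, hu₀2.le⟩
  have hanti := HH_strictAntiOn hγ hc₀
  have hinj := hanti.injOn
  have hHu₀lt : HH γ c₀ u₀ < HH γ c₀ (cStar γ c₀) := hanti hcSmem hu₀mem hu₀1
  have hHcpos : 0 < HH γ c₀ (cStar γ c₀) := hHu₀pos.trans hHu₀lt
  set Hc := HH γ c₀ (cStar γ c₀) with hHc_def
  set C := HH γ c₀ u₀ * Real.sin θ₀ with hC_def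
  have hCpos : 0 < C := mul_pos hHu₀pos hsθ₀
  set U : Set ℝ := Ioo 0 π ∩ Real.sin ⁻¹' (Ioi (C / Hc)) with hU_def
  have hUopen : IsOpen U := isOpen_Ioo.inter (isOpen_Ioi.preimage Real.continuous_sin)
  have hIccU : Icc θ₀ (π / 2) ⊆ U := by
    rintro θ ⟨h1, h2⟩
    refine ⟨⟨lt_of_lt_of_le hθ₀1 h1, by linarith⟩, ?_⟩
    have hsin : Real.sin θ₀ ≤ Real.sin θ := by
      apply Real.strictMonoOn_sin.monotoneOn ⟨by linarith, by linarith⟩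
        ⟨by linarith, h2⟩ h1
    have : C / Hc < Real.sin θ₀ := by
      rw [div_lt_iff₀ hHcpos, hC_def]
      nlinarith
    simp only [mem_preimage, mem_Ioi]
    linarith
  have hUs : ∀ θ ∈ U, 0 < Real.sin θ ∧ 0 < C / Real.sin θ ∧ C / Real.sin θ < Hc := by
    rintro θ ⟨-, hs⟩
    simp only [mem_preimage, mem_Ioi] at hs
    have h0 : 0 < C / Hc := div_pos hCpos hHcpos
    have hsin : 0 < Real.sin θ := h0.trans hs
    exact ⟨hsin, div_pos hCpos hsin, (div_lt_iff₀ hsin).2 (by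
      rw [div_lt_iff₀ hHcpos] at hs; nlinarith)⟩
  set u : ℝ → ℝ := fun θ =>
    if h : ∃ x, x ∈ Ioo (cStar γ c₀) (uMax γ c₀) ∧ HH γ c₀ x = C / Real.sin θ
    then Classical.choose h else u₀ with hu_def
  have hu_spec : ∀ θ ∈ U,
      u θ ∈ Ioo (cStar γ c₀) (uMax γ c₀) ∧ HH γ c₀ (u θ) = C / Real.sin θ := by
    intro θ hθ
    obtain ⟨hs, h1, h2⟩ := hUs θ hθ
    have hex := HH_root hγ hc₀ h1 h2
    rw [hu_def]
    simp only [dif_pos hex]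
    exact Classical.choose_spec hex
  have hθ₀U : θ₀ ∈ U := hIccU ⟨le_refl _, hθ₀2.le⟩
  have hu₀val : u θ₀ = u₀ := by
    obtain ⟨hmem, heq⟩ := hu_spec θ₀ hθ₀U
    apply hinj (Ioo_subset_Icc_self hmem) hu₀mem
    rw [heq, hC_def, mul_div_cancel_right₀ _ hsθ₀.ne']
  -- main derivative claim
  have hderiv : ∀ θ ∈ U, HasDerivAt u
      (Real.cot θ * qq γ c₀ (u θ) * u θ / (u θ ^ 2 - qq γ c₀ (u θ))) θ := by
    intro θ1 hθ1U
    obtain ⟨hx₁mem, hx₁eq⟩ := hu_spec θ1 hθ1U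
    obtain ⟨hsin1, hs1pos, hs1lt⟩ := hUs θ1 hθ1U
    set x₁ := u θ1 with hx₁def
    have hx₁0 : 0 < x₁ := hcSpos.trans hx₁mem.1
    have hq1 : 0 < qq γ c₀ x₁ := qq_pos hγ hc₀ hx₁0.le hx₁mem.2
    have hsup1 : qq γ c₀ x₁ < x₁ ^ 2 := qq_lt_sq hγ hc₀ hx₁mem.1
    set d := (qq γ c₀ x₁) ^ ((1:ℝ)/(γ-1)) * (qq γ c₀ x₁ - x₁ ^ 2) / qq γ c₀ x₁ with hd_def
    have hdneg : d < 0 := div_neg_of_neg_of_pos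
      (mul_neg_of_pos_of_neg (Real.rpow_pos_of_pos hq1 _) (by linarith)) hq1
    have hdne : d ≠ 0 := hdneg.ne
    have hstr : HasStrictDerivAt (HH γ c₀) d x₁ := HH_hasStrictDerivAt hγ hc₀ hq1
    have hgder : HasStrictDerivAt (hstr.localInverse _ _ _ hdne) d⁻¹ (HH γ c₀ x₁) :=
      hstr.to_localInverse hdne
    set g : ℝ → ℝ := hstr.localInverse _ _ _ hdne with hg_def
    have hgc : ContinuousAt g (HH γ c₀ x₁) :=
      (hstr.hasStrictFDerivAt_equiv hdne).localInverse_continuousAt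
    have hgx : g (HH γ c₀ x₁) = x₁ :=
      (hstr.hasStrictFDerivAt_equiv hdne).localInverse_apply_image
    have hright : ∀ᶠ y in 𝓝 (HH γ c₀ x₁), HH γ c₀ (g y) = y :=
      (hstr.hasStrictFDerivAt_equiv hdne).eventually_right_inverse
    -- the function s θ = C / sin θ
    have hsC : HasDerivAt (fun θ => C / Real.sin θ)
        (-(C * Real.cos θ1) / Real.sin θ1 ^ 2) θ1 := by
      have := (hasDerivAt_const θ1 C).div (Real.hasDerivAt_sin θ1) hsin1.ne'
      exact this.congr_deriv (by ring)
    have hscont : ContinuousAt (fun θ => C / Real.sin θ) θ1 := hsC.continuousAt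
    have hsval : C / Real.sin θ1 = HH γ c₀ x₁ := hx₁eq.symm
    -- eventual equality of u and g ∘ s
    have h1 : ∀ᶠ θ in 𝓝 θ1, θ ∈ U := hUopen.eventually_mem hθ1U
    have hright' : ∀ᶠ y in 𝓝 (C / Real.sin θ1), HH γ c₀ (g y) = y := by
      rw [hsval]; exact hright
    have h2 : ∀ᶠ θ in 𝓝 θ1, HH γ c₀ (g (C / Real.sin θ)) = C / Real.sin θ :=
      hscont.tendsto.eventually hright'
    have h3 : ∀ᶠ θ in 𝓝 θ1, g (C / Real.sin θ) ∈ Ioo (cStar γ c₀) (uMax γ c₀) := by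
      have hcomp : ContinuousAt (fun θ => g (C / Real.sin θ)) θ1 := by
        apply ContinuousAt.comp _ hscont
        rw [hsval]; exact hgc
      apply hcomp.eventually_mem
      apply isOpen_Ioo.mem_nhds
      show g (C / Real.sin θ1) ∈ _
      rw [hsval, hgx]
      exact hx₁mem
    have heq : u =ᶠ[𝓝 θ1] fun θ => g (C / Real.sin θ) := by
      filter_upwards [h1, h2, h3] with θ hU' h2' h3'
      obtain ⟨hm, he⟩ := hu_spec θ hU'
      exact hinj (Ioo_subset_Icc_self hm) (Ioo_subset_Icc_self h3') (by rw [he, h2'])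
    have hgs : HasDerivAt g d⁻¹ (C / Real.sin θ1) := by rw [hsval]; exact hgder.hasDerivAt
    have hcomp : HasDerivAt (fun θ => g (C / Real.sin θ))
        (d⁻¹ * (-(C * Real.cos θ1) / Real.sin θ1 ^ 2)) θ1 := hgs.comp θ1 hsC
    have huder : HasDerivAt u (d⁻¹ * (-(C * Real.cos θ1) / Real.sin θ1 ^ 2)) θ1 :=
      hcomp.congr_of_eventuallyEq heq
    apply huder.congr_deriv
    have hk := key_alg (γ := γ) (c₀ := c₀) hq1 hsup1 hsin1.ne'
    rw [hx₁eq] at hk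
    rw [← hd_def] at hk
    have hx2 : -(C / Real.sin θ1) * (Real.cos θ1 / Real.sin θ1)
        = -(C * Real.cos θ1) / Real.sin θ1 ^ 2 := by
      rw [sq, neg_mul, div_mul_div_comm, neg_div]
    rw [hx2] at hk
    rw [← hk, inv_mul_cancel_left₀ hdne]
  -- remaining facts
  have hqU : ∀ θ ∈ U, 0 < qq γ c₀ (u θ) := fun θ h =>
    qq_pos hγ hc₀ (hcSpos.trans (hu_spec θ h).1.1).le (hu_spec θ h).1.2
  have hqqcont : Continuous (qq γ c₀) := by
    unfold qq; exact continuous_const.sub (continuous_const.mul (continuous_pow 2))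
  have hdiffU : ∀ θ ∈ U, DifferentiableAt ℝ u θ := fun θ h => (hderiv θ h).differentiableAt
  have hcontU : ContinuousOn u U := fun θ h => (hdiffU θ h).continuousAt.continuousWithinAt
  have hcd : ContDiffOn ℝ 1 u U := by
    rw [show (1 : WithTop ℕ∞) = 0 + 1 by norm_num, contDiffOn_succ_iff_deriv_of_isOpen hUopen]
    refine ⟨fun θ h => (hdiffU θ h).differentiableWithinAt, by simp, ?_⟩
    rw [contDiffOn_zero]
    have hsne : ∀ θ ∈ U, Real.sin θ ≠ 0 := fun θ h => ((hUs θ h).1).ne'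
    have hcot : ContinuousOn Real.cot U := by
      apply ContinuousOn.congr
        (f := fun θ : ℝ => Real.cos θ / Real.sin θ)
      · exact Real.continuous_cos.continuousOn.div Real.continuous_sin.continuousOn hsne
      · intro θ h; exact Real.cot_eq_cos_div_sin θ
    have hexpl : ContinuousOn
        (fun θ => Real.cot θ * qq γ c₀ (u θ) * u θ / (u θ ^ 2 - qq γ c₀ (u θ))) U := by
      refine ContinuousOn.div ?_ ?_ ?_
      · exact (hcot.mul (hqqcont.comp_continuousOn hcontU)).mul hcontU
      · exact (hcontU.pow 2).sub (hqqcont.comp_continuousOn hcontU)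
      · intro θ h
        exact sub_ne_zero.2 (qq_lt_sq hγ hc₀ (hu_spec θ h).1.1).ne'
    exact ContinuousOn.congr hexpl fun θ h => (hderiv θ h).deriv
  refine ⟨u, ⟨hcd.mono hIccU, hu₀val, fun θ hθ => (hu_spec θ (hIccU hθ)).1, ?_⟩, ?_, ?_⟩
  · intro θ hθ
    have hU' := hIccU hθ
    have h := (hderiv θ hU').hasDerivWithinAt (s := Icc θ₀ (π/2))
    rw [sonic_sq (γ := γ) (c₀ := c₀) (hqU θ hU').le]
    exact h
  · -- strict monotonicity
    intro a ha b hb hab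
    have hUa := hIccU ha
    have hUb := hIccU hb
    have hsina := (hUs a hUa).1
    have hsab : Real.sin a < Real.sin b :=
      Real.strictMonoOn_sin ⟨by linarith [ha.1], ha.2⟩ ⟨by linarith [hb.1], hb.2⟩ hab
    have h1 : C / Real.sin b < C / Real.sin a :=
      div_lt_div_of_pos_left hCpos hsina hsab
    have hHa := (hu_spec a hUa).2
    have hHb := (hu_spec b hUb).2
    by_contra hle
    push_neg at hle
    rcases eq_or_lt_of_le hle with he | hl
    · rw [← he] at hHa
      rw [hHa] at hHb
      linarith
    · have := hanti (Ioo_subset_Icc_self (hu_spec b hUb).1)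
        (Ioo_subset_Icc_self (hu_spec a hUa).1) hl
      rw [hHa, hHb] at this
      linarith
  · -- uniqueness
    rintro v ⟨hv1, hv2, hv3, hv4⟩
    have hsinIcc : ∀ θ ∈ Icc θ₀ (π/2), 0 < Real.sin θ :=
      fun θ h => (hUs θ (hIccU h)).1
    have hgvcont : ContinuousOn (fun θ => HH γ c₀ (v θ) * Real.sin θ) (Icc θ₀ (π/2)) :=
      ((HH_cont hγ hc₀).comp_continuousOn hv1.continuousOn).mul
        Real.continuous_sin.continuousOn
    have hgvderiv : ∀ x ∈ Ico θ₀ (π/2),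
        HasDerivWithinAt (fun θ => HH γ c₀ (v θ) * Real.sin θ) 0 (Ici x) x := by
      intro x hx
      have hxIcc : x ∈ Icc θ₀ (π/2) := ⟨hx.1, hx.2.le⟩
      have hvx := hv3 x hxIcc
      have hq : 0 < qq γ c₀ (v x) := qq_pos hγ hc₀ (hcSpos.trans hvx.1).le hvx.2
      have hsup : qq γ c₀ (v x) < (v x) ^ 2 := qq_lt_sq hγ hc₀ hvx.1
      have hsin : 0 < Real.sin x := hsinIcc x hxIcc
      have hvd := hv4 x hxIcc
      rw [sonic_sq (γ := γ) (c₀ := c₀) hq.le] at hvd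
      have hHv := (HH_hasStrictDerivAt hγ hc₀ hq).hasDerivAt.comp_hasDerivWithinAt x hvd
      have hgvd := hHv.mul (Real.hasDerivAt_sin x).hasDerivWithinAt
      have hzero : (qq γ c₀ (v x) ^ ((1:ℝ)/(γ-1)) * (qq γ c₀ (v x) - (v x) ^ 2) / qq γ c₀ (v x))
            * (Real.cot x * qq γ c₀ (v x) * v x / (v x ^ 2 - qq γ c₀ (v x))) * Real.sin x
            + HH γ c₀ (v x) * Real.cos x = 0 := by
        rw [key_alg hq hsup hsin.ne']
        field_simp
        ring
      have hfinal := hgvd.congr_deriv hzero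
      exact hfinal.mono_of_mem_nhdsWithin (Icc_mem_nhdsGE_of_mem hx)
    have hconst := constant_of_has_deriv_right_zero hgvcont hgvderiv
    intro θ hθ
    have h1 := hconst θ hθ
    rw [hv2] at h1
    have hsθ : 0 < Real.sin θ := hsinIcc θ hθ
    have h3 : HH γ c₀ (v θ) = C / Real.sin θ := by
      rw [eq_div_iff hsθ.ne', hC_def]
      exact h1
    have h4 := (hu_spec θ (hIccU hθ)).2
    exact hinj (Ioo_subset_Icc_self (hu_spec θ (hIccU hθ)).1)
      (Ioo_subset_Icc_self (hv3 θ hθ)) (by rw [h3, h4])
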